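/- Let g be a real number and v a non-negative integer. The function φ̃_v(x) = e^{x²/2}·x^{1−g}·L_v^{(1/2−g)}(−x²) satisfies the Schrödinger equation −φ̃_v''(x) + ( x² + g(g−1)/x² − (1+2g) )·φ̃_v(x) = −4(v+1)·φ̃_v(x) for all x in the open interval (0, ∞). -/

import Mathlib

open Polynomial

/-- The generalized Laguerre polynomial
`L_n^{(α)}(x) = Σ_{k=0}^n ((−1)^k/k!)·((α+k+1)⋯(α+n)/(n−k)!)·x^k`. -/
noncomputable def laguerreL (α : ℝ) (n : ℕ) : Polynomial ℝ :=
  ∑ k ∈ Finset.range (n + 1),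
    Polynomial.C ((-1 : ℝ) ^ k / (Nat.factorial k)
      * (∏ i ∈ Finset.Ico (k + 1) (n + 1), (α + i)) / (Nat.factorial (n - k)))
      * X ^ k

noncomputable def lagA (α : ℝ) (v k : ℕ) : ℝ :=
  (-1 : ℝ) ^ k / (Nat.factorial k)
      * (∏ i ∈ Finset.Ico (k + 1) (v + 1), (α + i)) / (Nat.factorial (v - k))

lemma coeffL (α : ℝ) (v m : ℕ) :
    (laguerreL α v).coeff m = if m ≤ v then lagA α v m else 0 := by
  unfold laguerreL lagA
  rw [Polynomial.finset_sum_coeff]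
  simp only [Polynomial.coeff_C_mul, Polynomial.coeff_X_pow, mul_ite, mul_one, mul_zero]
  rw [Finset.sum_ite_eq (Finset.range (v+1)) m]
  simp [Nat.lt_succ_iff]

lemma lagRec (α : ℝ) (v k : ℕ) :
    ((k : ℝ) + 1) * (α + k + 1) * (laguerreL α v).coeff (k+1)
      = ((k : ℝ) - v) * (laguerreL α v).coeff k := by
  rw [coeffL, coeffL]
  rcases lt_trichotomy k v with h | h | h
  · rw [if_pos (show k + 1 ≤ v from h), if_pos h.le]
    unfold lagA
    have hprod : (∏ i ∈ Finset.Ico (k + 1) (v + 1), (α + i))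
        = (α + (k+1 : ℕ)) * ∏ i ∈ Finset.Ico (k + 1 + 1) (v + 1), (α + i) := by
      exact Finset.prod_eq_prod_Ico_succ_bot (by omega) _
    have hfac : (Nat.factorial (v - k) : ℝ) = (v - k) * Nat.factorial (v - (k+1)) := by
      have : v - k = (v - (k+1)) + 1 := by omega
      rw [this, Nat.factorial_succ]
      push_cast [Nat.cast_sub h.le, Nat.cast_sub (show k+1 ≤ v from h)]
      ring
    have hfac2 : (Nat.factorial (k+1) : ℝ) = (k+1) * Nat.factorial k := by
      rw [Nat.factorial_succ]; push_cast; ring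
    rw [hprod, hfac, hfac2]
    have h1 : (Nat.factorial k : ℝ) ≠ 0 := Nat.cast_ne_zero.mpr (Nat.factorial_ne_zero k)
    have h2 : (Nat.factorial (v - (k+1)) : ℝ) ≠ 0 := Nat.cast_ne_zero.mpr (Nat.factorial_ne_zero _)
    have h3 : ((v : ℝ) - k) ≠ 0 := by
      have : (k : ℝ) < v := by exact_mod_cast h
      linarith
    have h4 : ((k : ℝ) + 1) ≠ 0 := by positivity
    field_simp
    push_cast
    ring
  · subst h
    rw [if_neg (by omega), if_pos le_rfl]
    simp
  · rw [if_neg (by omega), if_neg (by omega)]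
    simp

lemma lagODE (α : ℝ) (v : ℕ) :
    X * derivative (derivative (laguerreL α v))
      + (C (α + 1) - X) * derivative (laguerreL α v)
      + C (v : ℝ) * laguerreL α v = 0 := by
  ext m
  simp only [coeff_add, coeff_zero, coeff_C_mul, sub_mul, coeff_sub]
  rcases m with _ | n
  · simp only [mul_coeff_zero, coeff_X_zero, zero_mul, coeff_derivative, Nat.cast_zero]
    have := lagRec α v 0
    simp only [Nat.cast_zero] at this
    push_cast
    linear_combination this
  · rw [coeff_X_mul, coeff_X_mul]
    simp only [coeff_derivative]
    have h1 := lagRec α v (n+1)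
    push_cast at h1 ⊢
    linear_combination h1

lemma hasDeriv_E (y : ℝ) :
    HasDerivAt (fun y : ℝ => Real.exp (y ^ 2 / 2)) (Real.exp (y ^ 2 / 2) * y) y := by
  have h : HasDerivAt (fun y : ℝ => y ^ 2 / 2) y y := by
    simpa using (hasDerivAt_pow 2 y).div_const 2
  exact h.exp

lemma hasDeriv_Q (p : Polynomial ℝ) (y : ℝ) :
    HasDerivAt (fun y : ℝ => p.eval (-(y ^ 2)))
      ((derivative p).eval (-(y ^ 2)) * (-(2 * y))) y := by
  have h : HasDerivAt (fun y : ℝ => -(y ^ 2)) (-(2 * y)) y := by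
    simpa using (hasDerivAt_pow 2 y).fun_neg
  exact (p.hasDerivAt (-(y ^ 2))).comp y h

/-- the pseudo virtual state wavefunctions
`φ̃_v(x) = e^{x²/2}·x^{1−g}·L_v^{(1/2−g)}(−x²)` of the radial oscillator satisfy
`−φ̃_v'' + (x² + g(g−1)/x² − (1+2g))·φ̃_v = −4(v+1)·φ̃_v` on `(0,∞)`. -/
theorem radial_pseudo_virtual_state (g : ℝ) (v : ℕ) :
    ∀ x ∈ Set.Ioi (0 : ℝ),
      -(deriv (deriv (fun y : ℝ =>
          Real.exp (y ^ 2 / 2) * y ^ ((1 : ℝ) - g)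
            * (laguerreL (1 / 2 - g) v).eval (-(y ^ 2)))) x)
        + (x ^ 2 + g * (g - 1) / x ^ 2 - (1 + 2 * g))
          * (Real.exp (x ^ 2 / 2) * x ^ ((1 : ℝ) - g)
              * (laguerreL (1 / 2 - g) v).eval (-(x ^ 2)))
      = -4 * (v + 1)
          * (Real.exp (x ^ 2 / 2) * x ^ ((1 : ℝ) - g)
              * (laguerreL (1 / 2 - g) v).eval (-(x ^ 2))) := by
  intro x hx
  have hx0 : (0 : ℝ) < x := hx
  have hxne : x ≠ 0 := ne_of_gt hx0
  set P : Polynomial ℝ := laguerreL (1 / 2 - g) v with hP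
  set P1 : Polynomial ℝ := derivative P with hP1
  set P2 : Polynomial ℝ := derivative P1 with hP2
  set D1 : ℝ → ℝ := fun y =>
      Real.exp (y ^ 2 / 2) * y * y ^ ((1 : ℝ) - g) * P.eval (-(y ^ 2))
    + Real.exp (y ^ 2 / 2) * ((1 - g) * y ^ ((1 : ℝ) - g - 1)) * P.eval (-(y ^ 2))
    + Real.exp (y ^ 2 / 2) * y ^ ((1 : ℝ) - g) * (P1.eval (-(y ^ 2)) * (-(2 * y)))
    with hD1
  have hf1 : ∀ y : ℝ, y ≠ 0 → HasDerivAt (fun y : ℝ =>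
      Real.exp (y ^ 2 / 2) * y ^ ((1 : ℝ) - g) * P.eval (-(y ^ 2))) (D1 y) y := by
    intro y hy
    have hR : HasDerivAt (fun y : ℝ => y ^ ((1 : ℝ) - g))
        (((1 : ℝ) - g) * y ^ ((1 : ℝ) - g - 1)) y :=
      Real.hasDerivAt_rpow_const (Or.inl hy)
    have := ((hasDeriv_E y).fun_mul hR).fun_mul (hasDeriv_Q P y)
    refine this.congr_deriv ?_
    simp only [hD1]
    ring
  have key : deriv (deriv (fun y : ℝ =>
      Real.exp (y ^ 2 / 2) * y ^ ((1 : ℝ) - g) * P.eval (-(y ^ 2)))) x = deriv D1 x := by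
    apply Filter.EventuallyEq.deriv_eq
    filter_upwards [Ioi_mem_nhds hx0] with y hy
    exact (hf1 y (ne_of_gt hy)).deriv
  -- second derivative
  have hR : HasDerivAt (fun y : ℝ => y ^ ((1 : ℝ) - g))
      (((1 : ℝ) - g) * x ^ ((1 : ℝ) - g - 1)) x :=
    Real.hasDerivAt_rpow_const (Or.inl hxne)
  have hR1 : HasDerivAt (fun y : ℝ => y ^ ((1 : ℝ) - g - 1))
      (((1 : ℝ) - g - 1) * x ^ ((1 : ℝ) - g - 1 - 1)) x :=
    Real.hasDerivAt_rpow_const (Or.inl hxne)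
  have hlin : HasDerivAt (fun y : ℝ => -(2 * y)) (-2 : ℝ) x := by
    simpa using ((hasDerivAt_id x).const_mul (2 : ℝ)).fun_neg
  have ht1 := (((hasDeriv_E x).fun_mul (hasDerivAt_id x)).fun_mul hR).fun_mul (hasDeriv_Q P x)
  have ht2 := ((hasDeriv_E x).fun_mul (hR1.const_mul ((1 : ℝ) - g))).fun_mul (hasDeriv_Q P x)
  have ht3 := ((hasDeriv_E x).fun_mul hR).fun_mul ((hasDeriv_Q P1 x).fun_mul hlin)
  have hf2 := (ht1.fun_add ht2).fun_add ht3
  have hD1deriv : HasDerivAt D1 _ x := hf2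
  rw [key, hD1deriv.deriv]
  -- algebra
  have hU1 : x ^ ((1 : ℝ) - g - 1) = x ^ ((1 : ℝ) - g) / x := by
    rw [Real.rpow_sub hx0, Real.rpow_one]
  have hU2 : x ^ ((1 : ℝ) - g - 1 - 1) = x ^ ((1 : ℝ) - g) / x ^ 2 := by
    rw [Real.rpow_sub hx0, Real.rpow_one, hU1]
    ring
  have hODE := congrArg (Polynomial.eval (-(x ^ 2))) (lagODE (1 / 2 - g) v)
  simp only [eval_add, eval_mul, eval_sub, eval_X, eval_C, eval_zero, ← hP, ← hP1, ← hP2]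
    at hODE
  rw [hU1, hU2]
  have hx2 : x ^ 2 ≠ 0 := pow_ne_zero 2 hxne
  simp only [id, ← hP1, ← hP2]
  field_simp
  linear_combination (4 * x ^ 2) * hODE
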